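/- (Norm bound on the inverse capacitance matrix via a Schur complement.) Let à be an invertible n×n real matrix and U, V n×k real matrices with ‖U‖ ≤ γ and ‖V‖ ≤ γ, and assume à + UVᵀ is invertible. Then the capacitance matrix S = I + Vᵀ Ã⁻¹ U is invertible and ‖S⁻¹‖ ≤ (1 + γ)² · max(1, ‖(à + UVᵀ)⁻¹‖). -/

import Mathlib

open Matrix
open scoped Matrix.Norms.L2Operator

lemma smw_norm_one_le {k : ℕ} : ‖(1 : Matrix (Fin k) (Fin k) ℝ)‖ ≤ 1 := by
  rw [Matrix.cstar_norm_def, _root_.map_one, ContinuousLinearMap.one_def]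
  exact ContinuousLinearMap.norm_id_le

/-- Norm bound on the inverse capacitance matrix via a Schur complement. -/
theorem smw_capacitance_inverse_norm_bound {n k : ℕ} (γ : ℝ)
    (At : Matrix (Fin n) (Fin n) ℝ) (hAt : IsUnit At)
    (U V : Matrix (Fin n) (Fin k) ℝ) (hU : ‖U‖ ≤ γ) (hV : ‖V‖ ≤ γ)
    (hAUV : IsUnit (At + U * Vᵀ)) :
    IsUnit ((1 : Matrix (Fin k) (Fin k) ℝ) + Vᵀ * At⁻¹ * U) ∧
      ‖((1 : Matrix (Fin k) (Fin k) ℝ) + Vᵀ * At⁻¹ * U)⁻¹‖ ≤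
        (1 + γ) ^ 2 * max 1 ‖(At + U * Vᵀ)⁻¹‖ := by
  have hγ : 0 ≤ γ := le_trans (norm_nonneg U) hU
  set B := At + U * Vᵀ with hB
  set S := (1 : Matrix (Fin k) (Fin k) ℝ) + Vᵀ * At⁻¹ * U with hS
  set T := (1 : Matrix (Fin k) (Fin k) ℝ) - Vᵀ * B⁻¹ * U with hT
  have hAd : IsUnit At.det := (Matrix.isUnit_iff_isUnit_det At).mp hAt
  have hBd : IsUnit B.det := (Matrix.isUnit_iff_isUnit_det B).mp hAUV
  have hA1 : At⁻¹ * At = 1 := Matrix.nonsing_inv_mul At hAd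
  have hB1 : B * B⁻¹ = 1 := Matrix.mul_nonsing_inv B hBd
  -- key identity: At⁻¹ * U = B⁻¹ * U + At⁻¹ * (U * (Vᵀ * (B⁻¹ * U)))
  have key : At⁻¹ * U = B⁻¹ * U + At⁻¹ * (U * (Vᵀ * (B⁻¹ * U))) := by
    have h1 : At⁻¹ * (B * (B⁻¹ * U)) = At⁻¹ * U := by
      rw [← Matrix.mul_assoc B B⁻¹ U, hB1, Matrix.one_mul]
    calc At⁻¹ * U = At⁻¹ * (B * (B⁻¹ * U)) := h1.symm
      _ = At⁻¹ * (At * (B⁻¹ * U)) + At⁻¹ * (U * (Vᵀ * (B⁻¹ * U))) := by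
          rw [hB]
          simp only [Matrix.add_mul, Matrix.mul_add, Matrix.mul_assoc]
      _ = B⁻¹ * U + At⁻¹ * (U * (Vᵀ * (B⁻¹ * U))) := by
          rw [← Matrix.mul_assoc At⁻¹ At _, hA1, Matrix.one_mul]
  have key2 : Vᵀ * (At⁻¹ * U) =
      Vᵀ * (B⁻¹ * U) + Vᵀ * (At⁻¹ * (U * (Vᵀ * (B⁻¹ * U)))) := by
    rw [key, Matrix.mul_add]
  have hST : S * T = 1 := by
    rw [hS, hT]
    simp only [Matrix.add_mul, Matrix.mul_sub, Matrix.mul_one, Matrix.one_mul,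
      Matrix.mul_assoc]
    rw [key2]
    abel
  have hUnit : IsUnit S := (Matrix.isUnit_iff_isUnit_det S).mpr (Matrix.isUnit_det_of_right_inverse hST)
  refine ⟨hUnit, ?_⟩
  have hSinv : S⁻¹ = T := Matrix.inv_eq_right_inv hST
  rw [hSinv, hT]
  have h1 : ‖(1 : Matrix (Fin k) (Fin k) ℝ) - Vᵀ * B⁻¹ * U‖ ≤ 1 + γ * ‖B⁻¹‖ * γ := by
    refine le_trans (norm_sub_le _ _) ?_
    gcongr
    · exact smw_norm_one_le
    · calc ‖Vᵀ * B⁻¹ * U‖ ≤ ‖Vᵀ * B⁻¹‖ * ‖U‖ := Matrix.l2_opNorm_mul _ _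
        _ ≤ (‖Vᵀ‖ * ‖B⁻¹‖) * ‖U‖ := by gcongr; exact Matrix.l2_opNorm_mul _ _
        _ ≤ (γ * ‖B⁻¹‖) * γ := by
            have hVt : ‖Vᵀ‖ ≤ γ := by
              have hc : (Vᵀ : Matrix (Fin k) (Fin n) ℝ) = Vᴴ := by
                ext i j; simp [Matrix.conjTranspose_apply]
              rw [hc, Matrix.l2_opNorm_conjTranspose]; exact hV
            gcongr
  refine h1.trans ?_
  have hm1 : (1:ℝ) ≤ max 1 ‖B⁻¹‖ := le_max_left _ _
  have hm2 : ‖B⁻¹‖ ≤ max 1 ‖B⁻¹‖ := le_max_right _ _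
  nlinarith [norm_nonneg B⁻¹, mul_le_mul_of_nonneg_left hm2 (mul_nonneg hγ hγ),
    mul_nonneg hγ (zero_le_one.trans hm1)]
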